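/- For a standard Young tableau T of shape λ ⊢ n, the Jucys-Murphy element J_k = Σ_{1≤i<k}(i,k) acts on Young's seminormal unit e_T by J_k · e_T = c_T(k) · e_T, where c_T(k) is the content (column index minus row index) of the cell of T containing k. -/

import Mathlib

open scoped Classical
open Finset

noncomputable section

namespace NC

/-- Conjugation of a group-algebra element by a permutation, extended linearly. -/
def conjA (n : ℕ) (σ : Equiv.Perm (Fin n)) (g : MonoidAlgebra ℂ (Equiv.Perm (Fin n))) :
    MonoidAlgebra ℂ (Equiv.Perm (Fin n)) :=
  MonoidAlgebra.mapDomain (fun π => σ * π * σ⁻¹) g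

/-- Cycle type of a permutation, including fixed points as parts equal to 1
(a partition of n, as a multiset). -/
def fullType {n : ℕ} (π : Equiv.Perm (Fin n)) : Multiset ℕ :=
  π.cycleType + Multiset.replicate (n - π.support.card) 1

/-- The length of the cycle of `π` containing `x`. -/
def cycLenAt {n : ℕ} (π : Equiv.Perm (Fin n)) (x : Fin n) : ℕ :=
  if π x = x then 1 else (π.cycleOf x).support.card

/-- The conjugacy class `C_λ` of permutations of `S_{n+1}` of cycle type `λ`. -/
def Ccl (n : ℕ) (lam : Multiset ℕ) : Finset (Equiv.Perm (Fin (n + 1))) :=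
  Finset.univ.filter fun π => fullType π = lam

/-- `C_{λ,i}`: permutations of cycle type `λ` having the largest symbol on a cycle of length `i`. -/
def Cset (n : ℕ) (lam : Multiset ℕ) (i : ℕ) : Finset (Equiv.Perm (Fin (n + 1))) :=
  (Ccl n lam).filter fun π => cycLenAt π (Fin.last n) = i

/-- The standard basis element `K_{λ,i}` of `Z_1(n+1)`. -/
def Kel (n : ℕ) (lam : Multiset ℕ) (i : ℕ) : MonoidAlgebra ℂ (Equiv.Perm (Fin (n + 1))) :=
  ∑ π ∈ Cset n lam i, MonoidAlgebra.single π 1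

/-- Membership in the centralizer `Z_1(n+1)` of the group algebra with respect to the
subgroup of permutations fixing the largest symbol. -/
def Z1mem (n : ℕ) (g : MonoidAlgebra ℂ (Equiv.Perm (Fin (n + 1)))) : Prop :=
  ∀ σ : Equiv.Perm (Fin (n + 1)), σ (Fin.last n) = Fin.last n → conjA (n + 1) σ g = g

/-- A filling `T : Fin m → Fin m × Fin m` (position of each entry, as (row, column))
is a standard Young tableau: it is injective and every initial segment of entries occupies a
lower set of cells (entries increase along rows and down columns). -/
def IsSYT (m : ℕ) (T : Fin m → Fin m × Fin m) : Prop :=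
  Function.Injective T ∧
    ∀ k : Fin m, ∀ c : Fin m × Fin m, c.1 ≤ (T k).1 → c.2 ≤ (T k).2 → ∃ j : Fin m, j ≤ k ∧ T j = c

/-- Length of row `r` of a filling. -/
def rowLen (m : ℕ) (T : Fin m → Fin m × Fin m) (r : ℕ) : ℕ :=
  (Finset.univ.filter fun k => ((T k).1 : ℕ) = r).card

/-- The shape of a filling, as the multiset of its (positive) row lengths. -/
def shapeOf (m : ℕ) (T : Fin m → Fin m × Fin m) : Multiset ℕ :=
  ((Multiset.range m).map fun r => rowLen m T r).filter (0 < ·)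

/-- The set of standard Young tableaux of shape `λ` with `m` cells. -/
def SYTall (m : ℕ) (lam : Multiset ℕ) : Finset (Fin m → Fin m × Fin m) :=
  Finset.univ.filter fun T => IsSYT m T ∧ shapeOf m T = lam

/-- `d_λ`, the number of standard Young tableaux of shape `λ`. -/
def dnum (m : ℕ) (lam : Multiset ℕ) : ℕ := (SYTall m lam).card

/-- `SYT_{λ,i}`: standard Young tableaux of shape `λ` in which the largest entry lies at the
end of a row of length `i`. -/
def SYTset (n : ℕ) (lam : Multiset ℕ) (i : ℕ) :
    Finset (Fin (n + 1) → Fin (n + 1) × Fin (n + 1)) :=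
  (SYTall (n + 1) lam).filter fun T => rowLen (n + 1) T ((T (Fin.last n)).1 : ℕ) = i

/-- The content (column minus row) of the entry `k` in the tableau `T`. -/
def ct (m : ℕ) (T : Fin m → Fin m × Fin m) (k : Fin m) : ℤ :=
  ((T k).2 : ℤ) - ((T k).1 : ℤ)

/-- The Jucys–Murphy element `J_{x+1} = Σ_{y<x} (y, x)` of `ℂ[S_m]`. -/
def JM (m : ℕ) (x : Fin m) : MonoidAlgebra ℂ (Equiv.Perm (Fin m)) :=
  ∑ y ∈ Finset.univ.filter (fun y : Fin m => y < x), MonoidAlgebra.single (Equiv.swap y x) 1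

/-- Young's seminormal unit `e_T`: the Gelfand–Tsetlin idempotent attached to `T`, realized by
Murphy's interpolation formula as a product of spectral projections of the Jucys–Murphy
elements onto the content eigenvalues of `T`. -/
def eTg (m : ℕ) (T : Fin m → Fin m × Fin m) : MonoidAlgebra ℂ (Equiv.Perm (Fin m)) :=
  ((List.finRange m).map fun (x : Fin m) =>
    (((((Finset.Icc (-((x : ℕ) : ℤ)) ((x : ℕ) : ℤ)).erase (ct m T x)).sort (· ≤ ·)).map fun c =>
      (((ct m T x - c : ℤ) : ℂ))⁻¹ •
        (JM m x - ((c : ℤ) : ℂ) • (1 : MonoidAlgebra ℂ (Equiv.Perm (Fin m))))).prod)).prod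

/-- The central element `X^λ = Σ_{T ∈ SYT_λ} e_T` of `ℂ[S_m]` (the central orthogonal
idempotent indexed by `λ`). -/
def Xg (m : ℕ) (lam : Multiset ℕ) : MonoidAlgebra ℂ (Equiv.Perm (Fin m)) :=
  ∑ T ∈ SYTall m lam, eTg m T

/-- The `Z_1`-idempotent `Γ^{λ,i} = Σ_{T ∈ SYT_{λ,i}} e_T`. -/
def Gam (n : ℕ) (lam : Multiset ℕ) (i : ℕ) : MonoidAlgebra ℂ (Equiv.Perm (Fin (n + 1))) :=
  ∑ T ∈ SYTset n lam i, eTg (n + 1) T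

/-- `i_-(λ)`: the partition obtained from `λ` by replacing one part `i` by `i - 1`. -/
def iminus (lam : Multiset ℕ) (i : ℕ) : Multiset ℕ :=
  ((i - 1) ::ₘ lam.erase i).filter (0 < ·)

/-- `c_{λ,i} = i - Σ_{k ≥ i} m_k(λ)`: the content of the cell containing the largest entry in
any tableau of shape `λ` with that entry at the end of a row of length `i`. -/
def cCorner (lam : Multiset ℕ) (i : ℕ) : ℤ :=
  (i : ℤ) - ((lam.filter fun k => i ≤ k).card : ℤ)

/-- The multiset of contents of the cells of the Ferrers diagram of `λ`. -/
def contentsM (lam : Multiset ℕ) : Multiset ℤ :=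
  ↑((((lam.sort (· ≤ ·)).reverse.zipIdx).map fun p =>
      (List.range p.1).map fun c => (c : ℤ) - (p.2 : ℤ)).flatten)

/-- The generalized character `γ^{μ,j}_{λ,i} = (n!/d_μ) [K_{λ,i}] Γ^{μ,j}`, the (normalized)
coefficient of the standard basis element `K_{λ,i}` in `Γ^{μ,j}` (computed as the average of the
coefficients of `Γ^{μ,j}` over the class `C_{λ,i}`). -/
def gam (n : ℕ) (mu : Multiset ℕ) (j : ℕ) (lam : Multiset ℕ) (i : ℕ) : ℂ :=
  ((Nat.factorial (n + 1) : ℂ) / (dnum (n + 1) mu : ℂ)) *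
    ((∑ π ∈ Cset n lam i, (Gam n mu j).coeff π) / ((Cset n lam i).card : ℂ))

/-- The irreducible character `χ^μ` evaluated at `π`: `(n!/d_μ)` times the coefficient of `π`
in the central idempotent `X^μ`. -/
def chi (n : ℕ) (mu : Multiset ℕ) (π : Equiv.Perm (Fin (n + 1))) : ℂ :=
  ((Nat.factorial (n + 1) : ℂ) / (dnum (n + 1) mu : ℂ)) * (Xg (n + 1) mu).coeff π

/-- The embedding of a permutation of `Fin n` into `S_{n+1}` fixing the last symbol. -/
def extPerm (n : ℕ) (π : Equiv.Perm (Fin n)) : Equiv.Perm (Fin (n + 1)) :=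
  π.viaFintypeEmbedding (Fin.castSuccEmb : Fin n ↪ Fin (n + 1))

/-- The induced embedding of group algebras `ℂ[S_n] → ℂ[S_{n+1}]`. -/
def embA (n : ℕ) (g : MonoidAlgebra ℂ (Equiv.Perm (Fin n))) :
    MonoidAlgebra ℂ (Equiv.Perm (Fin (n + 1))) :=
  MonoidAlgebra.mapDomain (extPerm n) g


section JMAux

open Polynomial MonoidAlgebra

/-! ### Commutation of Jucys–Murphy elements -/

lemma single_mul_JM {m : ℕ} (τ : Equiv.Perm (Fin m)) (b : Fin m) (hfix : τ b = b)
    (hb : ∀ z, τ z < b ↔ z < b) :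
    MonoidAlgebra.single τ (1 : ℂ) * JM m b = JM m b * MonoidAlgebra.single τ 1 := by
  unfold JM
  rw [Finset.mul_sum, Finset.sum_mul]
  refine Finset.sum_equiv (τ : Equiv.Perm (Fin m)) (fun z => ?_) (fun z hz => ?_)
  · simp only [Finset.mem_filter, Finset.mem_univ, true_and]
    exact (hb z).symm
  · rw [MonoidAlgebra.single_mul_single, MonoidAlgebra.single_mul_single, one_mul]
    congr 1
    have := Equiv.mul_swap_eq_swap_mul τ z b
    rw [hfix] at this
    exact this

lemma JM_commute_aux {m : ℕ} (a b : Fin m) (hab : a < b) :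
    Commute (JM m a) (JM m b) := by
  show JM m a * JM m b = JM m b * JM m a
  unfold JM
  rw [Finset.sum_mul, Finset.mul_sum]
  refine Finset.sum_congr rfl fun y hy => ?_
  simp only [Finset.mem_filter] at hy
  have hya : y < a := hy.2
  have hyb : y < b := lt_trans hya hab
  have h1 : Equiv.swap y a b = b :=
    Equiv.swap_apply_of_ne_of_ne (ne_of_gt hyb) (ne_of_gt hab)
  have h2 : ∀ z, Equiv.swap y a z < b ↔ z < b := by
    intro z
    rcases eq_or_ne z y with rfl | hzy
    · rw [Equiv.swap_apply_left]
      exact ⟨fun _ => hyb, fun _ => hab⟩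
    rcases eq_or_ne z a with rfl | hza
    · rw [Equiv.swap_apply_right]
      exact ⟨fun _ => hab, fun _ => hyb⟩
    · rw [Equiv.swap_apply_of_ne_of_ne hzy hza]
  exact single_mul_JM (Equiv.swap y a) b h1 h2

lemma JM_commute {m : ℕ} (a b : Fin m) : Commute (JM m a) (JM m b) := by
  rcases lt_trichotomy a b with h | rfl | h
  · exact JM_commute_aux a b h
  · exact Commute.refl _
  · exact (JM_commute_aux b a h).symm

/-! ### The left regular representation on Euclidean space -/

variable {m : ℕ}

/-- linear equivalence of the group algebra with Euclidean space. -/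
def toEuc (m : ℕ) :
    MonoidAlgebra ℂ (Equiv.Perm (Fin m)) ≃ₗ[ℂ] EuclideanSpace ℂ (Equiv.Perm (Fin m)) :=
  (MonoidAlgebra.coeffLinearEquiv ℂ).trans
    ((Finsupp.linearEquivFunOnFinite ℂ ℂ _).trans (WithLp.linearEquiv 2 ℂ _).symm)

/-- The left regular representation as an algebra morphism to endomorphisms of
Euclidean space. -/
def phi (m : ℕ) : MonoidAlgebra ℂ (Equiv.Perm (Fin m)) →ₐ[ℂ]
    Module.End ℂ (EuclideanSpace ℂ (Equiv.Perm (Fin m))) :=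
  (((toEuc m).conjAlgEquiv ℂ).toAlgHom).comp (Algebra.lmul ℂ _)

lemma phi_injective (m : ℕ) : Function.Injective (phi m) := by
  have : Function.Injective ((toEuc m).conjAlgEquiv ℂ) := ((toEuc m).conjAlgEquiv ℂ).injective
  exact this.comp (Algebra.lmul_injective)

lemma phi_apply (g : MonoidAlgebra ℂ (Equiv.Perm (Fin m)))
    (x : EuclideanSpace ℂ (Equiv.Perm (Fin m))) :
    phi m g x = toEuc m (g * (toEuc m).symm x) := rfl

lemma toEuc_apply (f : MonoidAlgebra ℂ (Equiv.Perm (Fin m))) (σ : Equiv.Perm (Fin m)) :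
    toEuc m f σ = f.coeff σ := rfl

lemma toEuc_symm_apply (x : EuclideanSpace ℂ (Equiv.Perm (Fin m))) (σ : Equiv.Perm (Fin m)) :
    ((toEuc m).symm x).coeff σ = x σ := rfl

lemma phi_single_apply (t : Equiv.Perm (Fin m)) (x : EuclideanSpace ℂ (Equiv.Perm (Fin m)))
    (σ : Equiv.Perm (Fin m)) :
    phi m (MonoidAlgebra.single t 1) x σ = x (t⁻¹ * σ) := by
  rw [phi_apply, toEuc_apply, MonoidAlgebra.coeff_single_mul_apply, one_mul, toEuc_symm_apply]

lemma phi_single_isSymmetric (t : Equiv.Perm (Fin m)) (ht : t⁻¹ = t) :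
    (phi m (MonoidAlgebra.single t 1)).IsSymmetric := by
  intro x y
  rw [PiLp.inner_apply, PiLp.inner_apply]
  simp only [phi_single_apply]
  rw [← Equiv.sum_comp (Equiv.mulLeft t) (fun σ => (inner ℂ (x (t⁻¹ * σ)) (y σ) : ℂ))]
  refine Finset.sum_congr rfl fun ρ _ => ?_
  simp only [Equiv.coe_mulLeft]
  rw [inv_mul_cancel_left, ht]

lemma isSymmetric_sum {ι : Type*} {E : Type*} [NormedAddCommGroup E] [InnerProductSpace ℂ E]
    (s : Finset ι) (f : ι → (E →ₗ[ℂ] E)) (h : ∀ i ∈ s, (f i).IsSymmetric) :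
    (∑ i ∈ s, f i).IsSymmetric := by
  intro x y
  simp only [LinearMap.coe_sum, Finset.sum_apply, sum_inner, inner_sum]
  exact Finset.sum_congr rfl fun i hi => h i hi x y

lemma phi_JM_isSymmetric (k : Fin m) : (phi m (JM m k)).IsSymmetric := by
  unfold JM
  rw [map_sum]
  refine isSymmetric_sum _ _ fun y _ => ?_
  exact phi_single_isSymmetric _ (Equiv.swap_inv y k)

/-! ### Polynomial evaluation on eigenvectors -/

lemma aeval_apply_of_eigen {E : Type*} [AddCommGroup E] [Module ℂ E]
    (f : Module.End ℂ E) {μ : ℂ} {v : E} (hv : f v = μ • v) (p : ℂ[X]) :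
    (Polynomial.aeval f p) v = p.eval μ • v := by
  have hpow : ∀ n : ℕ, (f ^ n) v = μ ^ n • v := by
    intro n
    induction n with
    | zero => simp
    | succ n ih =>
        rw [pow_succ, pow_succ, Module.End.mul_apply, hv, map_smul, ih, smul_smul,
          mul_comm μ (μ ^ n)]
  induction p using Polynomial.induction_on' with
  | add p q hp hq => rw [map_add, LinearMap.add_apply, hp, hq, Polynomial.eval_add, add_smul]
  | monomial n c =>
      rw [Polynomial.aeval_monomial, Polynomial.eval_monomial, Module.End.mul_apply,
        Module.algebraMap_end_apply, hpow, smul_smul]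

/-! ### The key annihilation identity for Jucys–Murphy elements -/

lemma JM_poly_eq_zero (m : ℕ) : ∀ (j : ℕ) (k : Fin m), (k : ℕ) = j →
    Polynomial.aeval (JM m k) (∏ c ∈ Finset.Icc (-(j : ℤ)) (j : ℤ), (X - C (c : ℂ))) = 0 := by
  intro j
  induction j with
  | zero =>
      intro k hk
      have hJM : JM m k = 0 := by
        unfold JM
        have hempty : Finset.univ.filter (fun y : Fin m => y < k) = ∅ := by
          rw [Finset.filter_eq_empty_iff]
          intro y _
          rw [Fin.lt_def, hk]
          omega
        rw [hempty, Finset.sum_empty]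
      rw [Nat.cast_zero, neg_zero, Finset.Icc_self, Finset.prod_singleton, hJM]
      simp
  | succ j IH =>
      intro k hk
      have hkm : j < m := lt_trans (by omega) k.isLt
      set k' : Fin m := ⟨j, hkm⟩ with hk'
      have hk'k : k' ≠ k := by
        intro h
        have h2 : j = (k : ℕ) := by rw [← h]
        omega
      set σ : Equiv.Perm (Fin m) := Equiv.swap k' k with hσ
      set s : MonoidAlgebra ℂ (Equiv.Perm (Fin m)) := MonoidAlgebra.single σ 1 with hs
      -- the element relation J_k = s · J_{k'} · s + s
      have hfilter : Finset.univ.filter (fun y : Fin m => y < k) =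
          insert k' (Finset.univ.filter (fun y : Fin m => y < k')) := by
        ext z
        simp only [Finset.mem_filter, Finset.mem_univ, true_and, Finset.mem_insert,
          Fin.lt_def, Fin.ext_iff]
        simp only [hk, hk']
        omega
      have hrel : JM m k = s * JM m k' * s + s := by
        unfold JM
        rw [hfilter, Finset.sum_insert (by simp), Finset.mul_sum, Finset.sum_mul]
        have hterm : ∀ y : Fin m, y < k' →
            s * MonoidAlgebra.single (Equiv.swap y k') 1 * s =
              MonoidAlgebra.single (Equiv.swap y k) (1 : ℂ) := by
          intro y hy
          rw [hs, MonoidAlgebra.single_mul_single, MonoidAlgebra.single_mul_single]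
          rw [one_mul, one_mul]
          congr 1
          have hyk' : y ≠ k' := ne_of_lt hy
          have hyk : y ≠ k := by
            intro h
            rw [Fin.lt_def] at hy
            rw [Fin.ext_iff] at h
            simp only [hk'] at hy
            omega
          have : σ * Equiv.swap y k' * σ⁻¹ = Equiv.swap (σ y) (σ k') :=
            (Equiv.swap_apply_apply σ y k').symm
          have hinv : σ⁻¹ = σ := by rw [hσ]; exact Equiv.swap_inv k' k
          rw [hinv] at this
          rw [this, hσ, Equiv.swap_apply_of_ne_of_ne hyk' hyk, Equiv.swap_apply_left]
        have hsum : ∑ y ∈ Finset.univ.filter (fun y : Fin m => y < k'),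
            MonoidAlgebra.single (Equiv.swap y k) (1 : ℂ) =
            ∑ y ∈ Finset.univ.filter (fun y : Fin m => y < k'),
              s * MonoidAlgebra.single (Equiv.swap y k') 1 * s := by
          refine Finset.sum_congr rfl fun y hy => ?_
          simp only [Finset.mem_filter] at hy
          exact (hterm y hy.2).symm
        rw [add_comm, hsum]
      -- pass to operators
      set A := phi m (JM m k') with hA
      set B := phi m (JM m k) with hB
      set S := phi m s with hS
      have hSS : S * S = 1 := by
        rw [hS, ← map_mul, hs, MonoidAlgebra.single_mul_single, one_mul, hσ,
          Equiv.swap_mul_self, ← MonoidAlgebra.one_def, map_one]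
      have hBrel : B = S * A * S + S := by
        rw [hB, hA, hS, hrel, map_add, map_mul, map_mul]
      have hArel : A = S * B * S - S := by
        rw [hBrel]
        have hexp : S * (S * A * S + S) * S = S * S * A * (S * S) + S * S * S := by
          noncomm_ring
        rw [hexp, hSS, one_mul, mul_one, one_mul, add_sub_cancel_right]
      have hAB : A * B = B * A := by
        rw [hA, hB, ← map_mul, ← map_mul, JM_commute]
      have hBsym : B.IsSymmetric := phi_JM_isSymmetric k
      have hAzero : Polynomial.aeval A
          (∏ c ∈ Finset.Icc (-(j : ℤ)) (j : ℤ), (X - C (c : ℂ))) = 0 := by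
        rw [hA, Polynomial.aeval_algHom_apply, IH k' rfl, map_zero]
      -- roots of the smaller polynomial lie in the smaller interval
      have hroot : ∀ x : ℂ, (∀ w, Polynomial.aeval A
            (∏ c ∈ Finset.Icc (-(j : ℤ)) (j : ℤ), (X - C (c : ℂ))) w = 0) →
          ∀ w : EuclideanSpace ℂ (Equiv.Perm (Fin m)), w ≠ 0 → A w = x • w →
          ∃ c ∈ Finset.Icc (-(j : ℤ)) (j : ℤ), x = (c : ℂ) := by
        intro x hz w hw hAw
        have h0 : (Polynomial.aeval A
            (∏ c ∈ Finset.Icc (-(j : ℤ)) (j : ℤ), (X - C (c : ℂ)))) w = 0 := hz w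
        rw [aeval_apply_of_eigen A hAw] at h0
        have heval : Polynomial.eval x
            (∏ c ∈ Finset.Icc (-(j : ℤ)) (j : ℤ), (X - C (c : ℂ))) = 0 := by
          rcases smul_eq_zero.mp h0 with h | h
          · exact h
          · exact absurd h hw
        rw [Polynomial.eval_prod, Finset.prod_eq_zero_iff] at heval
        obtain ⟨c, hc, hc0⟩ := heval
        rw [Polynomial.eval_sub, Polynomial.eval_X, Polynomial.eval_C, sub_eq_zero] at hc0
        exact ⟨c, hc, hc0⟩
      have hAzero' : ∀ w, Polynomial.aeval A
          (∏ c ∈ Finset.Icc (-(j : ℤ)) (j : ℤ), (X - C (c : ℂ))) w = 0 := by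
        intro w; rw [hAzero]; rfl
      -- every eigenvalue of B is an integer in [-(j+1), j+1]
      have key : ∀ μ : ℂ, Module.End.eigenspace B μ ≠ ⊥ →
          ∃ c ∈ Finset.Icc (-(j + 1 : ℤ)) (j + 1 : ℤ), μ = (c : ℂ) := by
        intro μ hE
        set E := Module.End.eigenspace B μ with hEdef
        have hInv : ∀ w ∈ E, A w ∈ E := by
          intro w hw
          rw [hEdef] at hw ⊢
          rw [Module.End.mem_eigenspace_iff] at hw ⊢
          have : B (A w) = A (B w) := by
            rw [← Module.End.mul_apply, ← Module.End.mul_apply, hAB]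
          rw [this, hw, map_smul]
        haveI : Nontrivial E := Submodule.nontrivial_iff_ne_bot.mpr hE
        obtain ⟨x, hx⟩ := Module.End.exists_eigenvalue (A.restrict hInv)
        obtain ⟨v, hvmem, hv0⟩ := hx.exists_hasEigenvector
        rw [Module.End.mem_eigenspace_iff] at hvmem
        set w : EuclideanSpace ℂ (Equiv.Perm (Fin m)) := v.1 with hwdef
        have hw0 : w ≠ 0 := fun h => hv0 (Subtype.ext h)
        have hAw : A w = x • w := by
          have h1 := congrArg Subtype.val hvmem
          rw [LinearMap.restrict_coe_apply] at h1
          simpa using h1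
        have hBw : B w = μ • w := Module.End.mem_eigenspace_iff.mp v.2
        have hxroot : ∃ c ∈ Finset.Icc (-(j : ℤ)) (j : ℤ), x = (c : ℂ) :=
          hroot x hAzero' w hw0 hAw
        by_cases hxμ : x = μ
        · obtain ⟨c, hc, hcx⟩ := hxroot
          refine ⟨c, ?_, by rw [← hxμ, hcx]⟩
          simp only [Finset.mem_Icc] at hc ⊢
          omega
        · by_cases hsv : ∃ ε : ℂ, S w = ε • w
          · obtain ⟨ε, hε⟩ := hsv
            have hε2 : ε * ε = 1 := by
              have h1 : S (S w) = w := by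
                rw [← Module.End.mul_apply, hSS, Module.End.one_apply]
              rw [hε, map_smul, hε, smul_smul] at h1
              by_contra hne
              have : (ε * ε - 1) • w = 0 := by
                rw [sub_smul, one_smul, h1, sub_self]
              rcases smul_eq_zero.mp this with h | h
              · exact hne (by linear_combination h)
              · exact hw0 h
            have hBval : B w = (x + ε) • w := by
              have h1 : B w = S (A (S w)) + S w := by
                rw [hBrel]
                simp only [LinearMap.add_apply, Module.End.mul_apply]
              have h2 : A (S w) = (ε * x) • w := by rw [hε, map_smul, hAw, smul_smul]
              have h3 : S (A (S w)) = (ε * x * ε) • w := by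
                rw [h2, map_smul, hε, smul_smul]
              rw [h1, h3, hε]
              rw [show ε * x * ε = x by rw [mul_comm ε x, mul_assoc, hε2, mul_one], add_smul]
            have hμval : μ = x + ε := by
              have : (μ - (x + ε)) • w = 0 := by
                rw [sub_smul, ← hBw, hBval, sub_self]
              rcases smul_eq_zero.mp this with h | h
              · exact sub_eq_zero.mp h
              · exact absurd h hw0
            obtain ⟨c, hc, hcx⟩ := hxroot
            have hε1 : ε = 1 ∨ ε = -1 := mul_self_eq_one_iff.mp hε2
            simp only [Finset.mem_Icc] at hc
            rcases hε1 with rfl | rfl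
            · refine ⟨c + 1, by simp only [Finset.mem_Icc]; omega, ?_⟩
              rw [hμval, hcx]; push_cast; ring
            · refine ⟨c - 1, by simp only [Finset.mem_Icc]; omega, ?_⟩
              rw [hμval, hcx]; push_cast; ring
          · -- S w is not proportional to w : build an eigenvector of A with eigenvalue μ
            set u : EuclideanSpace ℂ (Equiv.Perm (Fin m)) := S w + (x - μ)⁻¹ • w with hu
            have hu0 : u ≠ 0 := by
              intro h
              apply hsv
              refine ⟨-(x - μ)⁻¹, ?_⟩
              have : S w = -((x - μ)⁻¹ • w) := by
                rw [eq_neg_iff_add_eq_zero]; exact h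
              rw [this, neg_smul]
            have hASw : A (S w) = μ • S w - w := by
              rw [hArel]
              simp only [LinearMap.sub_apply, Module.End.mul_apply]
              have hSSw : S (S w) = w := by
                rw [← Module.End.mul_apply, hSS, Module.End.one_apply]
              rw [hSSw, hBw, map_smul]
            have hAu : A u = μ • u := by
              have hxμ' : (x - μ) ≠ 0 := sub_ne_zero.mpr hxμ
              rw [hu, map_add, map_smul, hASw, hAw, smul_smul, smul_add, smul_smul]
              have hco : (x - μ)⁻¹ * x = μ * (x - μ)⁻¹ + 1 := by
                field_simp
                try ring
              rw [hco, add_smul, one_smul]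
              abel
            obtain ⟨c, hc, hcx⟩ := hroot μ hAzero' u hu0 hAu
            refine ⟨c, ?_, hcx⟩
            simp only [Finset.mem_Icc] at hc ⊢
            omega
      -- conclude : the big polynomial annihilates B
      have hgoal : Polynomial.aeval B
          (∏ c ∈ Finset.Icc (-(j + 1 : ℤ)) (j + 1 : ℤ), (X - C (c : ℂ))) = 0 := by
        apply LinearMap.ext
        intro v
        have hv : v ∈ (⨆ μ, Module.End.eigenspace B μ) := by
          have htop : (⨆ μ, Module.End.eigenspace B μ) = ⊤ :=
            Submodule.orthogonal_eq_bot_iff.mp hBsym.orthogonalComplement_iSup_eigenspaces_eq_bot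
          rw [htop]; trivial
        rw [LinearMap.zero_apply]
        refine Submodule.iSup_induction _ (motive := fun w => Polynomial.aeval B
          (∏ c ∈ Finset.Icc (-(j + 1 : ℤ)) (j + 1 : ℤ), (X - C (c : ℂ))) w = 0) hv ?_ ?_ ?_
        · intro μ w hw
          by_cases hw0 : w = 0
          · rw [hw0, map_zero]
          · have hE : Module.End.eigenspace B μ ≠ ⊥ := by
              intro h
              rw [h, Submodule.mem_bot] at hw
              exact hw0 hw
            obtain ⟨c, hc, rfl⟩ := key μ hE
            rw [Module.End.mem_eigenspace_iff] at hw
            rw [aeval_apply_of_eigen B hw]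
            have : Polynomial.eval ((c : ℂ))
                (∏ c' ∈ Finset.Icc (-(j + 1 : ℤ)) (j + 1 : ℤ), (X - C (c' : ℂ))) = 0 := by
              rw [Polynomial.eval_prod]
              refine Finset.prod_eq_zero hc ?_
              rw [Polynomial.eval_sub, Polynomial.eval_X, Polynomial.eval_C, sub_self]
            rw [this, zero_smul]
        · exact map_zero _
        · intro w₁ w₂ h1 h2
          exact (map_add _ w₁ w₂).trans (by rw [h1, h2, add_zero])
      -- transfer back to the group algebra
      apply phi_injective m
      rw [map_zero, ← Polynomial.aeval_algHom_apply, ← hB]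
      push_cast
      push_cast at hgoal
      exact hgoal

/-! ### Combinatorial facts about standard Young tableaux -/

lemma isSYT_coord_le {m : ℕ} {T : Fin m → Fin m × Fin m} (hT : IsSYT m T) (k : Fin m) :
    ((T k).1 : ℕ) ≤ (k : ℕ) ∧ ((T k).2 : ℕ) ≤ (k : ℕ) := by
  obtain ⟨hinj, hlow⟩ := hT
  constructor
  · have hsub : (Finset.Iic (T k).1).image (fun r => ((r, (T k).2) : Fin m × Fin m)) ⊆
        (Finset.Iic k).image T := by
      intro x hx
      simp only [Finset.mem_image, Finset.mem_Iic] at hx ⊢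
      obtain ⟨r, hr, rfl⟩ := hx
      obtain ⟨j, hj, hTj⟩ := hlow k (r, (T k).2) hr le_rfl
      exact ⟨j, hj, hTj⟩
    have hcard := Finset.card_le_card hsub
    rw [Finset.card_image_of_injective _ (fun a b h => by
        simpa using congrArg Prod.fst h),
      Finset.card_image_of_injective _ hinj, Fin.card_Iic, Fin.card_Iic] at hcard
    omega
  · have hsub : (Finset.Iic (T k).2).image (fun c => (((T k).1, c) : Fin m × Fin m)) ⊆
        (Finset.Iic k).image T := by
      intro x hx
      simp only [Finset.mem_image, Finset.mem_Iic] at hx ⊢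
      obtain ⟨c, hc, rfl⟩ := hx
      obtain ⟨j, hj, hTj⟩ := hlow k ((T k).1, c) le_rfl hc
      exact ⟨j, hj, hTj⟩
    have hcard := Finset.card_le_card hsub
    rw [Finset.card_image_of_injective _ (fun a b h => by
        simpa using congrArg Prod.snd h),
      Finset.card_image_of_injective _ hinj, Fin.card_Iic, Fin.card_Iic] at hcard
    omega

lemma ct_mem_Icc {m : ℕ} {T : Fin m → Fin m × Fin m} (hT : IsSYT m T) (k : Fin m) :
    ct m T k ∈ Finset.Icc (-((k : ℕ) : ℤ)) ((k : ℕ) : ℤ) := by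
  obtain ⟨h1, h2⟩ := isSYT_coord_le hT k
  simp only [Finset.mem_Icc, ct]
  omega

/-! ### Assembling products of interpolation factors -/

lemma list_factor_prod {m : ℕ} (J : MonoidAlgebra ℂ (Equiv.Perm (Fin m))) (β : ℤ → ℂ)
    (l : List ℤ) :
    (l.map fun c => β c • (J - ((c : ℤ) : ℂ) • 1)).prod =
      (l.map β).prod •
        Polynomial.aeval J (l.map fun (c : ℤ) => (X : ℂ[X]) - C ((c : ℤ) : ℂ)).prod := by
  induction l with
  | nil => simp
  | cons c l ih =>
      simp only [List.map_cons, List.prod_cons]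
      rw [ih, smul_mul_assoc, mul_smul_comm, smul_smul, map_mul]
      congr 2
      rw [map_sub, Polynomial.aeval_X, Polynomial.aeval_C, Algebra.algebraMap_eq_smul_one]

lemma commute_aeval_right {A : Type*} [Semiring A] [Algebra ℂ A] {a b : A}
    (h : Commute a b) (q : ℂ[X]) : Commute a (Polynomial.aeval b q) := by
  induction q using Polynomial.induction_on' with
  | add p q hp hq => rw [map_add]; exact hp.add_right hq
  | monomial n c =>
      rw [Polynomial.aeval_monomial]
      exact Commute.mul_right (Algebra.commutes c a).symm (h.pow_right n)

lemma commute_aeval_aeval {A : Type*} [Semiring A] [Algebra ℂ A] {a b : A}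
    (h : Commute a b) (p q : ℂ[X]) :
    Commute (Polynomial.aeval a p) (Polynomial.aeval b q) :=
  (commute_aeval_right (commute_aeval_right h q).symm p).symm

lemma sort_map_prod {M : Type*} [CommMonoid M] (s : Finset ℤ) (f : ℤ → M) :
    ((s.sort (· ≤ ·)).map f).prod = ∏ c ∈ s, f c := by
  rw [Finset.prod_eq_multiset_prod, ← Finset.sort_eq s (· ≤ ·), Multiset.map_coe,
    Multiset.prod_coe]

end JMAux

/-- for a standard Young tableau `T` of shape `λ ⊢ n+1`, the Jucys–Murphy element
`J_k` acts on Young's seminormal unit `e_T` by `J_k e_T = c_T(k) e_T`, where `c_T(k)` is the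
content of the cell of `T` containing `k`. -/
theorem stmt5 (n : ℕ) (lam : Multiset ℕ) (hsum : lam.sum = n + 1) (hpos : ∀ a ∈ lam, 0 < a)
    (T : Fin (n + 1) → Fin (n + 1) × Fin (n + 1)) (hT : T ∈ SYTall (n + 1) lam)
    (k : Fin (n + 1)) :
    JM (n + 1) k * eTg (n + 1) T = (ct (n + 1) T k : ℂ) • eTg (n + 1) T := by
  classical
  have hT' := hT
  simp only [SYTall, Finset.mem_filter] at hT'
  have hsyt : IsSYT (n + 1) T := hT'.2.1
  have hc₀ : ct (n + 1) T k ∈ Finset.Icc (-((k : ℕ) : ℤ)) ((k : ℕ) : ℤ) := ct_mem_Icc hsyt k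
  set p : Fin (n + 1) → MonoidAlgebra ℂ (Equiv.Perm (Fin (n + 1))) := fun x =>
    (((((Finset.Icc (-((x : ℕ) : ℤ)) ((x : ℕ) : ℤ)).erase (ct (n + 1) T x)).sort
        (· ≤ ·)).map fun c =>
      (((ct (n + 1) T x - c : ℤ) : ℂ))⁻¹ •
        (JM (n + 1) x - ((c : ℤ) : ℂ) • (1 : MonoidAlgebra ℂ (Equiv.Perm (Fin (n + 1)))))).prod)
    with hp
  have heT : eTg (n + 1) T = ((List.finRange (n + 1)).map p).prod := rfl
  have hps : ∀ x : Fin (n + 1), p x =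
      ((((Finset.Icc (-((x : ℕ) : ℤ)) ((x : ℕ) : ℤ)).erase (ct (n + 1) T x)).sort (· ≤ ·)).map
          fun c => (((ct (n + 1) T x - c : ℤ) : ℂ))⁻¹).prod •
        Polynomial.aeval (JM (n + 1) x)
          (∏ c ∈ (Finset.Icc (-((x : ℕ) : ℤ)) ((x : ℕ) : ℤ)).erase (ct (n + 1) T x),
            ((Polynomial.X : Polynomial ℂ) - Polynomial.C ((c : ℤ) : ℂ))) := by
    intro x
    have h1 := list_factor_prod (JM (n + 1) x) (fun c => (((ct (n + 1) T x - c : ℤ) : ℂ))⁻¹)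
      (((Finset.Icc (-((x : ℕ) : ℤ)) ((x : ℕ) : ℤ)).erase (ct (n + 1) T x)).sort (· ≤ ·))
    rw [sort_map_prod _ (fun (c : ℤ) =>
      (Polynomial.X : Polynomial ℂ) - Polynomial.C ((c : ℤ) : ℂ))] at h1
    exact h1
  have hJsub : JM (n + 1) k - ((ct (n + 1) T k : ℤ) : ℂ) • 1 =
      Polynomial.aeval (JM (n + 1) k)
        ((Polynomial.X : Polynomial ℂ) - Polynomial.C ((ct (n + 1) T k : ℤ) : ℂ)) := by
    rw [map_sub, Polynomial.aeval_X, Polynomial.aeval_C, Algebra.algebraMap_eq_smul_one]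
  have hkey : (JM (n + 1) k - ((ct (n + 1) T k : ℤ) : ℂ) • 1) * p k = 0 := by
    rw [hps k, mul_smul_comm, hJsub, ← map_mul,
      Finset.mul_prod_erase _ (fun (c : ℤ) =>
        (Polynomial.X : Polynomial ℂ) - Polynomial.C ((c : ℤ) : ℂ)) hc₀,
      JM_poly_eq_zero (n + 1) (k : ℕ) k rfl, smul_zero]
  have hcommp : ∀ x : Fin (n + 1),
      Commute (JM (n + 1) k - ((ct (n + 1) T k : ℤ) : ℂ) • 1) (p x) := by
    intro x
    rw [hps x, hJsub]
    exact Commute.smul_right (commute_aeval_aeval (JM_commute k x) _ _) _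
  obtain ⟨l₁, l₂, hsplit⟩ := List.append_of_mem (List.mem_finRange k)
  have heq : (JM (n + 1) k - ((ct (n + 1) T k : ℤ) : ℂ) • 1) * eTg (n + 1) T = 0 := by
    rw [heT, hsplit, List.map_append, List.prod_append, List.map_cons, List.prod_cons]
    have h1 : Commute (JM (n + 1) k - ((ct (n + 1) T k : ℤ) : ℂ) • 1) ((l₁.map p).prod) := by
      refine Commute.list_prod_right _ _ ?_
      intro g hg
      obtain ⟨x, _, rfl⟩ := List.mem_map.mp hg
      exact hcommp x
    rw [← mul_assoc, h1.eq, mul_assoc,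
      ← mul_assoc (JM (n + 1) k - ((ct (n + 1) T k : ℤ) : ℂ) • 1) (p k), hkey, zero_mul,
      mul_zero]
  rw [sub_mul, smul_mul_assoc, one_mul, sub_eq_zero] at heq
  exact heq

end NC
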